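/- Let D satisfy D(0)=0, be four times differentiable at 0 with D''(0) < 0. Then lim_{ρ→0⁺} [ D(ρ²)/ρ⁴ − D'(ρ²)²/(D'(0)ρ²) ] = −(3/2) D''(0). -/

import Mathlib

open Real Filter Topology

/-- If `D(0)=0`, `D` is C⁴ near `0`, `D'(0) > 0` and `D''(0) < 0`, then
`lim_{ρ→0⁺} [ D(ρ²)/ρ⁴ − D'(ρ²)²/(D'(0)ρ²) ] = −(3/2) D''(0)`. -/
theorem stmt5 (D : ℝ → ℝ) (hD0 : D 0 = 0)
    (hsmooth : ContDiffAt ℝ 4 D 0)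
    (hD'0 : 0 < deriv D 0)
    (hD''0 : iteratedDeriv 2 D 0 < 0) :
    Filter.Tendsto
      (fun ρ : ℝ => D (ρ ^ 2) / ρ ^ 4 - (deriv D (ρ ^ 2)) ^ 2 / (deriv D 0 * ρ ^ 2))
      (nhdsWithin 0 (Set.Ioi 0))
      (nhds (-(3 / 2) * iteratedDeriv 2 D 0)) := by
  set a := deriv D 0 with ha
  set b := iteratedDeriv 2 D 0 with hb
  have ha0 : a ≠ 0 := ne_of_gt hD'0
  -- deriv D is C³ at 0
  have hd3 : ContDiffAt ℝ 3 (deriv D) 0 := by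
    have h := (hsmooth.fderiv_right (m := 3) (by norm_num)).clm_apply
      (contDiffAt_const (c := (1 : ℝ)))
    simpa only [fderiv_apply_one_eq_deriv] using h
  have hdd : HasDerivAt (deriv D) b 0 := by
    have hdiff : DifferentiableAt ℝ (deriv D) 0 := hd3.differentiableAt (by norm_num)
    have h2 : b = deriv (deriv D) 0 := by
      rw [hb, iteratedDeriv_succ, iteratedDeriv_one]
    rw [h2]; exact hdiff.hasDerivAt
  have hcont : ContinuousAt (deriv D) 0 := hdd.continuousAt
  -- slope limit for deriv D at 0 from the right
  have hB : Tendsto (fun x : ℝ => (deriv D x - a) / x) (𝓝[>] (0:ℝ)) (𝓝 b) := by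
    have h1 := hasDerivAt_iff_tendsto_slope.mp hdd
    have h2 : Tendsto (slope (deriv D) 0) (𝓝[>] (0:ℝ)) (𝓝 b) :=
      h1.mono_left (nhdsWithin_mono 0
        (fun x hx => Set.mem_compl_singleton_iff.mpr (ne_of_gt hx)))
    refine h2.congr (fun x => ?_)
    simp [slope_def_field, ← ha]
  -- D is eventually differentiable near 0
  have hev : ∀ᶠ x in 𝓝 (0:ℝ), DifferentiableAt ℝ D x :=
    (hsmooth.eventually (by norm_num)).mono
      (fun x hx => hx.differentiableAt (by norm_num))
  -- L'Hôpital: second-order Taylor remainder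
  have hA : Tendsto (fun x : ℝ => (D x - a * x - b / 2 * x ^ 2) / x ^ 2)
      (𝓝[>] (0:ℝ)) (𝓝 0) := by
    apply HasDerivAt.lhopital_zero_nhdsGT
      (f' := fun x => deriv D x - a - b * x) (g' := fun x => 2 * x)
    · filter_upwards [nhdsWithin_le_nhds hev] with x hx
      exact ((hx.hasDerivAt.sub ((hasDerivAt_id x).const_mul a)).sub
        (((hasDerivAt_pow 2 x)).const_mul (b / 2))).congr_deriv (by ring)
    · filter_upwards with x
      simpa using (hasDerivAt_pow 2 x)
    · filter_upwards [self_mem_nhdsWithin] with x hx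
      have : (0:ℝ) < x := hx
      positivity
    · have hc : Tendsto D (𝓝[>] (0:ℝ)) (𝓝 0) := by
        simpa [hD0] using hsmooth.continuousAt.continuousWithinAt.tendsto
      have h1 : Tendsto (fun x : ℝ => a * x) (𝓝[>] (0:ℝ)) (𝓝 (a * 0)) :=
        tendsto_nhdsWithin_of_tendsto_nhds
          ((continuous_const.mul continuous_id).tendsto 0)
      have h2 : Tendsto (fun x : ℝ => b / 2 * x ^ 2) (𝓝[>] (0:ℝ)) (𝓝 (b / 2 * 0 ^ 2)) :=
        tendsto_nhdsWithin_of_tendsto_nhds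
          ((continuous_const.mul (continuous_pow 2)).tendsto 0)
      have := (hc.sub h1).sub h2
      simpa using this
    · have : Tendsto (fun x : ℝ => x ^ 2) (𝓝[>] (0:ℝ)) (𝓝 ((0:ℝ) ^ 2)) :=
        tendsto_nhdsWithin_of_tendsto_nhds ((continuous_pow 2).tendsto 0)
      simpa using this
    · have h := (hB.sub_const b).div_const 2
      have h0 : (b - b) / 2 = (0:ℝ) := by ring
      rw [h0] at h
      refine h.congr' ?_
      filter_upwards [self_mem_nhdsWithin] with x hx
      have hx0 : x ≠ 0 := ne_of_gt hx
      field_simp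
  -- the algebraic part
  have hG : Tendsto (fun x : ℝ => b / 2 + (a - deriv D x) / x * ((a + deriv D x) / a))
      (𝓝[>] (0:ℝ)) (𝓝 (-(3 / 2) * b)) := by
    have h1 : Tendsto (fun x : ℝ => (a - deriv D x) / x) (𝓝[>] (0:ℝ)) (𝓝 (-b)) := by
      have := hB.neg
      refine this.congr (fun x => ?_)
      ring
    have h2 : Tendsto (fun x : ℝ => (a + deriv D x) / a) (𝓝[>] (0:ℝ)) (𝓝 2) := by
      have hc : Tendsto (fun x : ℝ => (a + deriv D x) / a) (𝓝[>] (0:ℝ))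
          (𝓝 ((a + deriv D 0) / a)) :=
        tendsto_nhdsWithin_of_tendsto_nhds
          (((continuousAt_const.add hcont).div_const a).tendsto)
      have : (a + deriv D 0) / a = 2 := by
        rw [← ha]; field_simp; ring
      rwa [this] at hc
    have := (tendsto_const_nhds (x := b / 2) (f := 𝓝[>] (0:ℝ))).add (h1.mul h2)
    have hval : b / 2 + -b * 2 = -(3 / 2) * b := by ring
    rwa [hval] at this
  -- combine into the one-variable limit
  have hE : Tendsto (fun x : ℝ => D x / x ^ 2 - (deriv D x) ^ 2 / (a * x))
      (𝓝[>] (0:ℝ)) (𝓝 (-(3 / 2) * b)) := by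
    have h := hA.add hG
    rw [zero_add] at h
    refine h.congr' ?_
    filter_upwards [self_mem_nhdsWithin] with x hx
    have hx0 : x ≠ 0 := ne_of_gt hx
    field_simp
    ring
  -- compose with ρ ↦ ρ²
  have hsq : Tendsto (fun ρ : ℝ => ρ ^ 2) (𝓝[>] (0:ℝ)) (𝓝[>] (0:ℝ)) := by
    rw [tendsto_nhdsWithin_iff]
    constructor
    · have : Tendsto (fun ρ : ℝ => ρ ^ 2) (𝓝[>] (0:ℝ)) (𝓝 ((0:ℝ) ^ 2)) :=
        tendsto_nhdsWithin_of_tendsto_nhds ((continuous_pow 2).tendsto 0)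
      simpa using this
    · filter_upwards [self_mem_nhdsWithin] with x hx
      exact Set.mem_Ioi.mpr (pow_pos hx 2)
  have := hE.comp hsq
  refine this.congr (fun ρ => ?_)
  simp only [Function.comp_apply]
  ring_nf
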